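/- Random-coding decoding error bound: let d : X^n × Y^n → ℝ≥0 satisfy E_{Q_X^n} d(X, y) ≤ 1 for all y ∈ Y^n, and let codewords {X(m,w)} for (m,w) ∈ M_n × W_n be i.i.d. ∼ Q_X^n, decoded by the maximum-d rule. Then for every channel W_n : X^n → P(Y^n), every η > 0, and every (m,w), the expected probability of decoding error for message (m,w) is at most P_{Q_X^n W_n}(d(X,Y) < |M_n||W_n|/η) + η. -/

import Mathlib

open scoped Classical
open Finset
set_option maxHeartbeats 1000000

lemma sum_prod_fun {I α : Type} [Fintype I] [Fintype α] [DecidableEq I]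
    (h : I → α → ℝ) :
    ∑ C : I → α, ∏ j, h j (C j) = ∏ j, ∑ z, h j z := by
  rw [Finset.prod_univ_sum, Fintype.piFinset_univ]

lemma marg1 {I α : Type} [Fintype I] [Fintype α] [DecidableEq I]
    (μ : α → ℝ) (hμ : ∑ x, μ x = 1) (i : I) (A : α → ℝ) :
    ∑ C : I → α, (∏ j, μ (C j)) * A (C i) = ∑ x, μ x * A x := by
  calc ∑ C : I → α, (∏ j, μ (C j)) * A (C i)
      = ∑ C : I → α, ∏ j, (μ (C j) * if j = i then A (C j) else 1) := by
        refine Finset.sum_congr rfl fun C _ => ?_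
        rw [Finset.prod_mul_distrib, Finset.prod_ite_eq' Finset.univ i (fun j => A (C j))]
        simp
    _ = ∏ j, ∑ z, (μ z * if j = i then A z else 1) :=
        sum_prod_fun (fun j z => μ z * if j = i then A z else 1)
    _ = ∏ j, (if j = i then ∑ x, μ x * A x else 1) := by
        refine Finset.prod_congr rfl fun j _ => ?_
        by_cases hj : j = i <;> simp [hj, hμ, ← Finset.sum_mul]
    _ = ∑ x, μ x * A x := by
        rw [Finset.prod_ite_eq' Finset.univ i (fun _ => ∑ x, μ x * A x)]; simp

lemma marg2 {I α : Type} [Fintype I] [Fintype α] [DecidableEq I]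
    (μ : α → ℝ) (hμ : ∑ x, μ x = 1) {i i' : I} (hii : i ≠ i') (A B : α → ℝ) :
    ∑ C : I → α, (∏ j, μ (C j)) * A (C i) * B (C i')
      = (∑ x, μ x * A x) * (∑ x, μ x * B x) := by
  calc ∑ C : I → α, (∏ j, μ (C j)) * A (C i) * B (C i')
      = ∑ C : I → α, ∏ j, (μ (C j) * (if j = i then A (C j) else 1)
          * (if j = i' then B (C j) else 1)) := by
        refine Finset.sum_congr rfl fun C _ => ?_
        simp only [Finset.prod_mul_distrib, Finset.prod_ite_eq', Finset.mem_univ,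
          if_true]
    _ = ∏ j, ∑ z, (μ z * (if j = i then A z else 1) * (if j = i' then B z else 1)) :=
        sum_prod_fun (fun j z => μ z * (if j = i then A z else 1) * (if j = i' then B z else 1))
    _ = ∏ j, ((if j = i then ∑ x, μ x * A x else 1) * (if j = i' then ∑ x, μ x * B x else 1)) := by
        refine Finset.prod_congr rfl fun j _ => ?_
        by_cases hj : j = i
        · subst hj
          simp [hii, ← Finset.sum_mul]
        · by_cases hj' : j = i' <;> simp [hj, hj', hμ, Ne.symm hii, ← Finset.sum_mul]
    _ = (∑ x, μ x * A x) * (∑ x, μ x * B x) := by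
        simp only [Finset.prod_mul_distrib, Finset.prod_ite_eq', Finset.mem_univ,
          if_true]

theorem random_coding_error_bound (X Y : Type) [Fintype X] [Fintype Y] (n : ℕ)
    (M W : Type) [Fintype M] [Fintype W]
    (QX : X → ℝ) (hQX0 : ∀ x, 0 ≤ QX x) (hQX1 : ∑ x, QX x = 1)
    (d : (Fin n → X) → (Fin n → Y) → ℝ) (hd0 : ∀ x y, 0 ≤ d x y)
    (hdE : ∀ y : Fin n → Y, ∑ x : Fin n → X, (∏ i, QX (x i)) * d x y ≤ 1)
    (Wn : (Fin n → X) → (Fin n → Y) → ℝ)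
    (hWn0 : ∀ x y, 0 ≤ Wn x y) (hWn1 : ∀ x, ∑ y, Wn x y = 1)
    (η : ℝ) (hη : 0 < η) (m : M) (w : W) :
    ∑ C : M × W → Fin n → X,
        (∏ p : M × W, ∏ i, QX (C p i)) *
          ∑ y ∈ Finset.univ.filter (fun y : Fin n → Y =>
              ¬ ∀ p : M × W, p ≠ (m, w) → d (C p) y < d (C (m, w)) y),
            Wn (C (m, w)) y
      ≤ (∑ x : Fin n → X, (∏ i, QX (x i)) *
          ∑ y ∈ Finset.univ.filter
              (fun y => d x y < (Fintype.card M * Fintype.card W : ℝ) / η),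
            Wn x y) + η := by
  classical
  set T : ℝ := (Fintype.card M * Fintype.card W : ℝ) / η with hTdef
  have hMpos : 0 < (Fintype.card M : ℝ) := by
    exact_mod_cast Fintype.card_pos_iff.mpr ⟨m⟩
  have hWpos : 0 < (Fintype.card W : ℝ) := by
    exact_mod_cast Fintype.card_pos_iff.mpr ⟨w⟩
  have hMW : 0 < ((Fintype.card M : ℝ) * Fintype.card W) := mul_pos hMpos hWpos
  have hTpos : 0 < T := div_pos hMW hη
  set μ : (Fin n → X) → ℝ := fun x => ∏ i, QX (x i) with hμdef
  have hμfold : ∀ x : Fin n → X, (∏ i, QX (x i)) = μ x := fun _ => rfl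
  have hμ0 : ∀ x, 0 ≤ μ x := fun x => Finset.prod_nonneg fun i _ => hQX0 _
  have hμ1 : ∑ x, μ x = 1 := by
    have h := sum_prod_fun (fun (_ : Fin n) (z : X) => QX z)
    simpa [hμdef, hQX1] using h
  have hdE' : ∀ y : Fin n → Y, ∑ x, μ x * d x y ≤ 1 := by
    intro y; simpa [hμdef] using hdE y
  simp only [hμfold]
  -- Markov's inequality
  have hMark : ∀ y : Fin n → Y,
      ∑ x, μ x * (if T ≤ d x y then (1:ℝ) else 0) ≤ 1 / T := by
    intro y
    have h1 : ∑ x, μ x * (if T ≤ d x y then (1:ℝ) else 0)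
        ≤ ∑ x, μ x * (d x y / T) := by
      refine Finset.sum_le_sum fun x _ => ?_
      refine mul_le_mul_of_nonneg_left ?_ (hμ0 x)
      split_ifs with h
      · rw [le_div_iff₀ hTpos]; linarith
      · exact div_nonneg (hd0 _ _) hTpos.le
    have h2 : ∑ x, μ x * (d x y / T) = (∑ x, μ x * d x y) / T := by
      rw [Finset.sum_div]
      exact Finset.sum_congr rfl fun x _ => (mul_div_assoc _ _ _).symm
    rw [h2] at h1
    refine h1.trans ?_
    rw [div_le_div_iff₀ hTpos hTpos]
    nlinarith [hdE' y, hTpos]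
  -- pointwise bound on the error probability for a fixed codebook
  have key : ∀ C : M × W → Fin n → X,
      (∑ y ∈ Finset.univ.filter (fun y : Fin n → Y =>
          ¬ ∀ p : M × W, p ≠ (m, w) → d (C p) y < d (C (m, w)) y), Wn (C (m, w)) y)
      ≤ (∑ y, Wn (C (m, w)) y * (if d (C (m, w)) y < T then (1:ℝ) else 0))
        + ∑ p ∈ Finset.univ.erase (m, w),
            ∑ y, Wn (C (m, w)) y * (if T ≤ d (C p) y then (1:ℝ) else 0) := by
    intro C
    have step1 : (∑ y ∈ Finset.univ.filter (fun y : Fin n → Y =>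
          ¬ ∀ p : M × W, p ≠ (m, w) → d (C p) y < d (C (m, w)) y), Wn (C (m, w)) y)
        ≤ ∑ y, Wn (C (m, w)) y * ((if d (C (m, w)) y < T then (1:ℝ) else 0)
            + ∑ p ∈ Finset.univ.erase (m, w), (if T ≤ d (C p) y then (1:ℝ) else 0)) := by
      rw [Finset.sum_filter]
      refine Finset.sum_le_sum fun y _ => ?_
      have hnn : (0:ℝ) ≤ ∑ p ∈ Finset.univ.erase (m, w),
          (if T ≤ d (C p) y then (1:ℝ) else 0) :=
        Finset.sum_nonneg fun q _ => by positivity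
      have hnn2 : (0:ℝ) ≤ (if d (C (m, w)) y < T then (1:ℝ) else 0) := by positivity
      by_cases hy : ¬ ∀ p : M × W, p ≠ (m, w) → d (C p) y < d (C (m, w)) y
      · rw [if_pos hy]
        have hbr : (1:ℝ) ≤ (if d (C (m, w)) y < T then (1:ℝ) else 0)
            + ∑ p ∈ Finset.univ.erase (m, w), (if T ≤ d (C p) y then (1:ℝ) else 0) := by
          push_neg at hy
          obtain ⟨p, hp, hpd⟩ := hy
          by_cases hlt : d (C (m, w)) y < T
          · rw [if_pos hlt]; linarith
          · have hTle : T ≤ d (C p) y := le_trans (not_lt.mp hlt) hpd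
            have h1 : (1:ℝ) ≤ ∑ p' ∈ Finset.univ.erase (m, w),
                (if T ≤ d (C p') y then (1:ℝ) else 0) := by
              have h2 := Finset.single_le_sum
                (f := fun p' : M × W => if T ≤ d (C p') y then (1:ℝ) else 0)
                (fun q _ => by positivity)
                (Finset.mem_erase.mpr ⟨hp, Finset.mem_univ p⟩)
              simpa [hTle] using h2
            rw [if_neg hlt]; linarith
        calc Wn (C (m, w)) y = Wn (C (m, w)) y * 1 := (mul_one _).symm
          _ ≤ _ := mul_le_mul_of_nonneg_left hbr (hWn0 _ _)
      · rw [if_neg hy]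
        exact mul_nonneg (hWn0 _ _) (add_nonneg hnn2 hnn)
    refine step1.trans_eq ?_
    simp only [mul_add, Finset.mul_sum, Finset.sum_add_distrib]
    congr 1
    exact Finset.sum_comm
  calc ∑ C : M × W → Fin n → X,
        (∏ p : M × W, μ (C p)) *
          ∑ y ∈ Finset.univ.filter (fun y : Fin n → Y =>
              ¬ ∀ p : M × W, p ≠ (m, w) → d (C p) y < d (C (m, w)) y),
            Wn (C (m, w)) y
      ≤ ∑ C : M × W → Fin n → X, (∏ p : M × W, μ (C p)) *
          ((∑ y, Wn (C (m, w)) y * (if d (C (m, w)) y < T then (1:ℝ) else 0))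
            + ∑ p ∈ Finset.univ.erase (m, w),
                ∑ y, Wn (C (m, w)) y * (if T ≤ d (C p) y then (1:ℝ) else 0)) := by
        refine Finset.sum_le_sum fun C _ => ?_
        exact mul_le_mul_of_nonneg_left (key C)
          (Finset.prod_nonneg fun p _ => hμ0 _)
    _ = (∑ x : Fin n → X, μ x * ∑ y, Wn x y * (if d x y < T then (1:ℝ) else 0))
        + ∑ C : M × W → Fin n → X, (∏ p : M × W, μ (C p)) *
            ∑ p ∈ Finset.univ.erase (m, w),
              ∑ y, Wn (C (m, w)) y * (if T ≤ d (C p) y then (1:ℝ) else 0) := by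
        simp only [mul_add, Finset.sum_add_distrib]
        congr 1
        exact marg1 μ hμ1 (m, w)
          (fun x => ∑ y, Wn x y * (if d x y < T then (1:ℝ) else 0))
    _ ≤ (∑ x : Fin n → X, μ x * ∑ y, Wn x y * (if d x y < T then (1:ℝ) else 0)) + η := by
        refine add_le_add (le_refl _) ?_
        have hper : ∀ p ∈ Finset.univ.erase ((m, w) : M × W),
            ∑ C : M × W → Fin n → X, (∏ q : M × W, μ (C q)) *
              ∑ y, Wn (C (m, w)) y * (if T ≤ d (C p) y then (1:ℝ) else 0) ≤ 1 / T := by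
          intro p hp
          have hpne : ((m, w) : M × W) ≠ p := Ne.symm (Finset.mem_erase.mp hp).1
          have heq : ∑ C : M × W → Fin n → X, (∏ q : M × W, μ (C q)) *
              ∑ y, Wn (C (m, w)) y * (if T ≤ d (C p) y then (1:ℝ) else 0)
              = ∑ y, (∑ x, μ x * Wn x y) *
                  (∑ x, μ x * (if T ≤ d x y then (1:ℝ) else 0)) := by
            calc ∑ C : M × W → Fin n → X, (∏ q : M × W, μ (C q)) *
                  ∑ y, Wn (C (m, w)) y * (if T ≤ d (C p) y then (1:ℝ) else 0)
                = ∑ y, ∑ C : M × W → Fin n → X, (∏ q : M × W, μ (C q)) *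
                    Wn (C (m, w)) y * (if T ≤ d (C p) y then (1:ℝ) else 0) := by
                  rw [Finset.sum_comm]
                  refine Finset.sum_congr rfl fun C _ => ?_
                  rw [Finset.mul_sum]
                  exact Finset.sum_congr rfl fun y _ => (mul_assoc _ _ _).symm
              _ = ∑ y, (∑ x, μ x * Wn x y) *
                    (∑ x, μ x * (if T ≤ d x y then (1:ℝ) else 0)) := by
                  refine Finset.sum_congr rfl fun y _ => ?_
                  exact marg2 μ hμ1 hpne (fun x => Wn x y)
                    (fun x => if T ≤ d x y then (1:ℝ) else 0)
          rw [heq]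
          have hle : ∑ y, (∑ x, μ x * Wn x y) *
              (∑ x, μ x * (if T ≤ d x y then (1:ℝ) else 0))
              ≤ ∑ y : Fin n → Y, (∑ x, μ x * Wn x y) * (1 / T) := by
            refine Finset.sum_le_sum fun y _ => ?_
            exact mul_le_mul_of_nonneg_left (hMark y)
              (Finset.sum_nonneg fun x _ => mul_nonneg (hμ0 x) (hWn0 _ _))
          refine hle.trans ?_
          have : ∑ y : Fin n → Y, (∑ x, μ x * Wn x y) * (1 / T)
              = (∑ x, μ x * ∑ y, Wn x y) * (1 / T) := by
            rw [← Finset.sum_mul, Finset.sum_comm]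
            congr 1
            exact Finset.sum_congr rfl fun x _ => (Finset.mul_sum _ _ _).symm
          rw [this]
          simp only [hWn1, mul_one, hμ1, one_mul]
          exact le_refl _
        have hsum : ∑ p ∈ Finset.univ.erase ((m, w) : M × W),
            (∑ C : M × W → Fin n → X, (∏ q : M × W, μ (C q)) *
              ∑ y, Wn (C (m, w)) y * (if T ≤ d (C p) y then (1:ℝ) else 0))
            ≤ ∑ p ∈ Finset.univ.erase ((m, w) : M × W), 1 / T :=
          Finset.sum_le_sum hper
        calc ∑ C : M × W → Fin n → X, (∏ p : M × W, μ (C p)) *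
              ∑ p ∈ Finset.univ.erase (m, w),
                ∑ y, Wn (C (m, w)) y * (if T ≤ d (C p) y then (1:ℝ) else 0)
            = ∑ p ∈ Finset.univ.erase ((m, w) : M × W),
                ∑ C : M × W → Fin n → X, (∏ q : M × W, μ (C q)) *
                  ∑ y, Wn (C (m, w)) y * (if T ≤ d (C p) y then (1:ℝ) else 0) := by
              rw [← Finset.sum_comm]
              exact Finset.sum_congr rfl fun C _ => Finset.mul_sum _ _ _
          _ ≤ ∑ p ∈ Finset.univ.erase ((m, w) : M × W), 1 / T := hsum
          _ ≤ η := by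
              rw [Finset.sum_const]
              have hcard : ((Finset.univ.erase ((m, w) : M × W)).card : ℝ)
                  ≤ (Fintype.card M : ℝ) * Fintype.card W := by
                have h1 : (Finset.univ.erase ((m, w) : M × W)).card ≤ Finset.univ.card :=
                  Finset.card_le_card (Finset.erase_subset _ _)
                have h2 : (Finset.univ : Finset (M × W)).card
                    = Fintype.card M * Fintype.card W := by
                  simp [Fintype.card_prod]
                rw [h2] at h1
                exact_mod_cast h1
              have hT1 : (0:ℝ) ≤ 1 / T := by positivity
              calc ((Finset.univ.erase ((m, w) : M × W)).card : ℕ) • (1 / T)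
                  = ((Finset.univ.erase ((m, w) : M × W)).card : ℝ) * (1 / T) := by
                    rw [nsmul_eq_mul]
                _ ≤ ((Fintype.card M : ℝ) * Fintype.card W) * (1 / T) :=
                    mul_le_mul_of_nonneg_right hcard hT1
                _ = η := by
                    rw [hTdef]
                    field_simp
    _ = (∑ x : Fin n → X, μ x *
          ∑ y ∈ Finset.univ.filter (fun y => d x y < T), Wn x y) + η := by
        congr 1
        refine Finset.sum_congr rfl fun x _ => ?_
        congr 1
        rw [Finset.sum_filter]
        refine Finset.sum_congr rfl fun y _ => ?_
        by_cases h : d x y < T <;> simp [h]
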